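/- Let X be a compact, locally connected metric space and p : X̃ → X a covering map. Then p admits an overlay structure, and any two overlay structures on p are equivalent. -/

import Mathlib

/-- The data exhibiting `p : E → X` as a covering map: an open cover `{U_α}` of `X`,
with `p⁻¹(U_α)` a disjoint union of open sets `U_α^λ` each mapped homeomorphically
onto `U_α` by `p`. -/
structure CoverData {E X : Type} [TopologicalSpace E] [TopologicalSpace X]
    (p : E → X) : Type 1 where
  ι : Type
  base : ι → Set X
  base_open : ∀ a, IsOpen (base a)
  base_cover : ∀ x : X, ∃ a, x ∈ base a
  Λ : ι → Type
  sheet : ∀ a, Λ a → Set E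
  sheet_open : ∀ a l, IsOpen (sheet a l)
  sheet_disjoint : ∀ a, ∀ l l' : Λ a, l ≠ l' → Disjoint (sheet a l) (sheet a l')
  sheet_preimage : ∀ a, p ⁻¹' (base a) = ⋃ l, sheet a l
  sheet_homeo : ∀ a l, ∃ e : (sheet a l) ≃ₜ (base a),
    ∀ z : (sheet a l), (e z : X) = p z

/-- An overlay structure on a covering map: an indexed cover `{U_α^λ}` of the total
space lying over an open cover of the base, such that whenever `U_α^λ ∩ U_β^μ ≠ ∅`
and `U_α^λ ∩ U_β^ν ≠ ∅` one has `μ = ν`. -/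
structure OverlayStructure {E X : Type} [TopologicalSpace E] [TopologicalSpace X]
    (p : E → X) extends CoverData p : Type 1 where
  overlay : ∀ a b (l : Λ a) (μ ν : Λ b),
    (sheet a l ∩ sheet b μ).Nonempty → (sheet a l ∩ sheet b ν).Nonempty → μ = ν

/-- `O` refines `O'` (as covers of the total space) if every sheet of `O` is
contained in some sheet of `O'`. -/
def OverlayStructure.Refines {E X : Type} [TopologicalSpace E] [TopologicalSpace X]
    {p : E → X} (O O' : OverlayStructure p) : Prop :=
  ∀ a l, ∃ b m, O.sheet a l ⊆ O'.sheet b m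

/-- Two overlay structures on `p` are equivalent if some overlay structure on `p`
refines both of them. -/
def OverlayStructure.Equiv {E X : Type} [TopologicalSpace E] [TopologicalSpace X]
    {p : E → X} (O O' : OverlayStructure p) : Prop :=
  ∃ O'' : OverlayStructure p, O''.Refines O ∧ O''.Refines O'

section Aux

open Set

variable {E X : Type} [TopologicalSpace E] [TopologicalSpace X] {p : E → X}

/-- A preconnected set inside `p⁻¹(U_b)` meeting one sheet lies in that sheet. -/
lemma CoverData.subset_sheet (D : CoverData p) (b : D.ι) {s : Set E}
    (hs : IsPreconnected s) (hsub : s ⊆ p ⁻¹' (D.base b)) (l : D.Λ b)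
    (hne : (s ∩ D.sheet b l).Nonempty) : s ⊆ D.sheet b l := by
  set v : Set E := ⋃ l' ∈ {l' : D.Λ b | l' ≠ l}, D.sheet b l' with hv_def
  have hv : IsOpen v := isOpen_biUnion fun l' _ => D.sheet_open b l'
  have hcover : s ⊆ D.sheet b l ∪ v := by
    intro z hz
    have hz' : z ∈ p ⁻¹' (D.base b) := hsub hz
    rw [D.sheet_preimage b] at hz'
    obtain ⟨_, ⟨l', rfl⟩, hl'⟩ := hz'
    by_cases h : l' = l
    · exact Or.inl (h ▸ hl')
    · exact Or.inr (mem_biUnion h hl')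
  rcases (s ∩ v).eq_empty_or_nonempty with h | h
  · intro z hz
    rcases hcover hz with h1 | h1
    · exact h1
    · exact absurd (Set.mem_inter hz h1) (by simp [h])
  · obtain ⟨z, hzs, hzl, hzv⟩ := hs _ _ (D.sheet_open b l) hv hcover hne h
    obtain ⟨_, ⟨l', rfl⟩, hl'⟩ := hzv
    obtain ⟨_, ⟨hl'ne, rfl⟩, hz2⟩ := hl'
    exact absurd hzl (Set.disjoint_right.mp (D.sheet_disjoint b l l' (Ne.symm hl'ne)) hz2)

/-- `p` is injective on each sheet. -/
lemma CoverData.injOn_sheet (D : CoverData p) (b : D.ι) (l : D.Λ b) :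
    Set.InjOn p (D.sheet b l) := by
  obtain ⟨e, he⟩ := D.sheet_homeo b l
  intro z hz z' hz' hp
  have h1 : e ⟨z, hz⟩ = e ⟨z', hz'⟩ := Subtype.ext (by rw [he, he, hp])
  exact congrArg Subtype.val (e.injective h1)

/-- `p` is an open map. -/
lemma CoverData.isOpenMap (D : CoverData p) : IsOpenMap p := by
  intro s hs
  have hrw : p '' s = ⋃ (b) (l), p '' (s ∩ D.sheet b l) := by
    apply subset_antisymm
    · rintro _ ⟨z, hz, rfl⟩
      obtain ⟨b, hb⟩ := D.base_cover (p z)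
      have hz' : z ∈ p ⁻¹' (D.base b) := hb
      rw [D.sheet_preimage b] at hz'
      obtain ⟨_, ⟨l, rfl⟩, hl⟩ := hz'
      exact mem_iUnion.2 ⟨b, mem_iUnion.2 ⟨l, ⟨z, ⟨hz, hl⟩, rfl⟩⟩⟩
    · exact iUnion_subset fun b => iUnion_subset fun l =>
        image_mono (f := p) inter_subset_left
  rw [hrw]
  refine isOpen_iUnion fun b => isOpen_iUnion fun l => ?_
  obtain ⟨e, he⟩ := D.sheet_homeo b l
  have key : p '' (s ∩ D.sheet b l) = Subtype.val '' (e '' (Subtype.val ⁻¹' s)) := by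
    ext w
    constructor
    · rintro ⟨z, ⟨hzs, hzl⟩, rfl⟩
      exact ⟨e ⟨z, hzl⟩, ⟨⟨z, hzl⟩, hzs, rfl⟩, he ⟨z, hzl⟩⟩
    · rintro ⟨w', ⟨z, hzs, rfl⟩, rfl⟩
      exact ⟨z.1, ⟨hzs, z.2⟩, (he z).symm⟩
  rw [key]
  exact (D.base_open b).isOpenMap_subtype_val _
    (e.isOpenMap _ (hs.preimage continuous_subtype_val))

/-- The intersection of a sheet with the preimage of a preconnected subset of the base
set is preconnected. -/
lemma CoverData.isPreconnected_slice (D : CoverData p) (b : D.ι) (l : D.Λ b) {V : Set X}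
    (hV : IsPreconnected V) (hVsub : V ⊆ D.base b) :
    IsPreconnected (D.sheet b l ∩ p ⁻¹' V) := by
  obtain ⟨e, he⟩ := D.sheet_homeo b l
  have hVpre : IsPreconnected ((Subtype.val : D.base b → X) ⁻¹' V) := by
    rw [← Topology.IsInducing.subtypeVal.isPreconnected_image]
    have : (Subtype.val : D.base b → X) '' (Subtype.val ⁻¹' V) = V := by
      rw [Subtype.image_preimage_coe, inter_eq_right.mpr hVsub]
    rw [this]; exact hV
  have himg : D.sheet b l ∩ p ⁻¹' V = (fun w : D.base b => (e.symm w : E)) ''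
      (Subtype.val ⁻¹' V) := by
    ext z
    constructor
    · rintro ⟨hzl, hzV⟩
      refine ⟨e ⟨z, hzl⟩, ?_, ?_⟩
      · show ((e ⟨z, hzl⟩ : X)) ∈ V
        rw [he]; exact hzV
      · show ((e.symm (e ⟨z, hzl⟩) : E)) = z
        rw [e.symm_apply_apply]
    · rintro ⟨w, hw, rfl⟩
      refine ⟨(e.symm w).2, ?_⟩
      show p (e.symm w : E) ∈ V
      rw [← he (e.symm w), e.apply_symm_apply]
      exact hw
  rw [himg]
  exact hVpre.image _ (continuous_subtype_val.comp e.symm.continuous).continuousOn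

/-- A connected component of `p⁻¹(V)` for preconnected `V ⊆ U_b` equals the intersection
of the corresponding sheet with `p⁻¹(V)`. -/
lemma CoverData.connectedComponentIn_eq_slice (D : CoverData p) (b : D.ι) (l : D.Λ b)
    {V : Set X} (hV : IsPreconnected V) (hVsub : V ⊆ D.base b) {e₀ : E}
    (he₀ : p e₀ ∈ V) (he₀s : e₀ ∈ D.sheet b l) :
    connectedComponentIn (p ⁻¹' V) e₀ = D.sheet b l ∩ p ⁻¹' V := by
  apply subset_antisymm
  · refine subset_inter ?_ (connectedComponentIn_subset _ _)
    exact D.subset_sheet b isPreconnected_connectedComponentIn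
      ((connectedComponentIn_subset _ _).trans (preimage_mono hVsub)) l
      ⟨e₀, mem_connectedComponentIn he₀, he₀s⟩
  · exact (D.isPreconnected_slice b l hV hVsub).subset_connectedComponentIn
      ⟨he₀s, he₀⟩ inter_subset_right

/-- The slice of a sheet over an open `V ⊆ U_b` is homeomorphic to `V` via `p`. -/
lemma CoverData.slice_homeo (D : CoverData p) (hcont : Continuous p) (b : D.ι)
    (l : D.Λ b) {V : Set X} (hVo : IsOpen V) (hVsub : V ⊆ D.base b) :
    ∃ h : (D.sheet b l ∩ p ⁻¹' V : Set E) ≃ₜ V, ∀ z, (h z : X) = p z := by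
  obtain ⟨e, he⟩ := D.sheet_homeo b l
  set C := D.sheet b l ∩ p ⁻¹' V with hC_def
  have hCo : IsOpen C := (D.sheet_open b l).inter (hVo.preimage hcont)
  have hbij : Function.Bijective (fun z : C => (⟨p z.1, z.2.2⟩ : V)) := by
    constructor
    · intro z z' h
      exact Subtype.ext (D.injOn_sheet b l z.2.1 z'.2.1 (congrArg Subtype.val h))
    · rintro ⟨v, hv⟩
      have hp : p (e.symm ⟨v, hVsub hv⟩ : E) = v := by
        rw [← he (e.symm _), e.apply_symm_apply]
      refine ⟨⟨(e.symm ⟨v, hVsub hv⟩ : E), (e.symm ⟨v, hVsub hv⟩).2, ?_⟩, ?_⟩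
      · show p _ ∈ V
        rw [hp]; exact hv
      · exact Subtype.ext hp
  have hcg : Continuous (fun z : C => (⟨p z.1, z.2.2⟩ : V)) :=
    (hcont.comp continuous_subtype_val).subtype_mk _
  have hog : IsOpenMap (fun z : C => (⟨p z.1, z.2.2⟩ : V)) := by
    intro u hu
    rw [isOpen_induced_iff] at hu
    obtain ⟨o, ho, rfl⟩ := hu
    have himg : (fun z : C => (⟨p z.1, z.2.2⟩ : V)) '' (Subtype.val ⁻¹' o) =
        Subtype.val ⁻¹' (p '' (C ∩ o)) := by
      ext v
      constructor
      · rintro ⟨z, hz, rfl⟩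
        exact ⟨z.1, ⟨z.2, hz⟩, rfl⟩
      · rintro ⟨z, hz, hpz⟩
        exact ⟨⟨z, hz.1⟩, hz.2, Subtype.ext hpz⟩
    rw [himg]
    exact (D.isOpenMap _ (hCo.inter ho)).preimage continuous_subtype_val
  exact ⟨Equiv.toHomeomorphOfContinuousOpen (Equiv.ofBijective _ hbij) hcg hog,
    fun z => rfl⟩

end Aux

open Set in
/-- The main construction: given any covering data `C₀` and two further covering data
`D`, `D'`, there is an overlay structure whose sheets refine both `D` and `D'`. -/
lemma overlay_main {E X : Type} [TopologicalSpace E] [MetricSpace X] [CompactSpace X]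
    [LocallyConnectedSpace X] {p : E → X} (hcont : Continuous p)
    (C₀ D D' : CoverData p) :
    ∃ O : OverlayStructure p, (∀ a l, ∃ b m, O.sheet a l ⊆ D.sheet b m) ∧
      (∀ a l, ∃ b m, O.sheet a l ⊆ D'.sheet b m) := by
  classical
  set c : C₀.ι × D.ι × D'.ι → Set X :=
    fun i => C₀.base i.1 ∩ D.base i.2.1 ∩ D'.base i.2.2 with hc_def
  have hcopen : ∀ i, IsOpen (c i) := fun i =>
    ((C₀.base_open _).inter (D.base_open _)).inter (D'.base_open _)
  have hccov : (univ : Set X) ⊆ ⋃ i, c i := by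
    intro x _
    obtain ⟨a, ha⟩ := C₀.base_cover x
    obtain ⟨b, hb⟩ := D.base_cover x
    obtain ⟨b', hb'⟩ := D'.base_cover x
    exact mem_iUnion.2 ⟨(a, b, b'), ⟨⟨ha, hb⟩, hb'⟩⟩
  obtain ⟨δ, hδ, hball⟩ := lebesgue_number_lemma_of_metric isCompact_univ hcopen hccov
  have H : ∀ x : X, ∃ i, Metric.ball x δ ⊆ c i := fun x => hball x (mem_univ x)
  choose idx hidx using H
  have HV : ∀ x : X, ∃ W : Set X, W ⊆ Metric.ball x (δ / 3) ∧ IsOpen W ∧ x ∈ W ∧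
      IsConnected W := fun x =>
    locallyConnectedSpace_iff_subsets_isOpen_isConnected.mp ‹_› x _
      (Metric.ball_mem_nhds x (by positivity))
  choose V hV1 hV2 hV3 hV4 using HV
  have hVpc : ∀ x, IsPreconnected (V x) := fun x => (hV4 x).isPreconnected
  have hVball : ∀ x, V x ⊆ Metric.ball x δ := fun x =>
    (hV1 x).trans (Metric.ball_subset_ball (by linarith))
  have hVC₀ : ∀ x, V x ⊆ C₀.base (idx x).1 := fun x =>
    (hVball x).trans ((hidx x).trans (fun y hy => hy.1.1))
  have hVD : ∀ x, V x ⊆ D.base (idx x).2.1 := fun x =>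
    (hVball x).trans ((hidx x).trans (fun y hy => hy.1.2))
  have hVD' : ∀ x, V x ⊆ D'.base (idx x).2.2 := fun x =>
    (hVball x).trans ((hidx x).trans (fun y hy => hy.2))
  have hoverlap : ∀ x y : X, (V x ∩ V y).Nonempty → V y ⊆ C₀.base (idx x).1 := by
    rintro x y ⟨q, hqx, hqy⟩ w hw
    have h1 : dist q x < δ / 3 := Metric.mem_ball.mp (hV1 x hqx)
    have h2 : dist q y < δ / 3 := Metric.mem_ball.mp (hV1 y hqy)
    have h3 : dist w y < δ / 3 := Metric.mem_ball.mp (hV1 y hw)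
    have hwx : w ∈ Metric.ball x δ := by
      rw [Metric.mem_ball]
      calc dist w x ≤ dist w y + dist y q + dist q x := dist_triangle4 w y q x
        _ < δ / 3 + δ / 3 + δ / 3 := by
            rw [dist_comm q y] at h2
            linarith
        _ = δ := by ring
    exact (hidx x hwx).1.1
  -- the key description of components of `p⁻¹(V x)` as slices of `C₀`-sheets
  have key : ∀ (x : X) (ax : C₀.ι), V x ⊆ C₀.base ax → ∀ C : Set E,
      (∃ z ∈ p ⁻¹' (V x), C = connectedComponentIn (p ⁻¹' (V x)) z) →
      ∃ m, C = C₀.sheet ax m ∩ p ⁻¹' (V x) := by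
    rintro x ax hsub C ⟨z, hz, rfl⟩
    have hz' : z ∈ p ⁻¹' (C₀.base ax) := hsub hz
    rw [C₀.sheet_preimage ax] at hz'
    obtain ⟨_, ⟨m, rfl⟩, hm⟩ := hz'
    exact ⟨m, C₀.connectedComponentIn_eq_slice ax m (hVpc x) hsub hz hm⟩
  -- refinement of arbitrary covering data
  have ref : ∀ (Dd : CoverData p) (x : X) (bx : Dd.ι), V x ⊆ Dd.base bx →
      ∀ C : Set E, (∃ z ∈ p ⁻¹' (V x), C = connectedComponentIn (p ⁻¹' (V x)) z) →
      ∃ m, C ⊆ Dd.sheet bx m := by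
    rintro Dd x bx hsub C ⟨z, hz, rfl⟩
    have hz' : z ∈ p ⁻¹' (Dd.base bx) := hsub hz
    rw [Dd.sheet_preimage bx] at hz'
    obtain ⟨_, ⟨m, rfl⟩, hm⟩ := hz'
    exact ⟨m, Dd.subset_sheet bx isPreconnected_connectedComponentIn
      ((connectedComponentIn_subset _ _).trans (preimage_mono hsub)) m
      ⟨z, mem_connectedComponentIn hz, hm⟩⟩
  refine ⟨{ ι := X
            base := V
            base_open := hV2
            base_cover := fun x => ⟨x, hV3 x⟩
            Λ := fun x => {C : Set E //
              ∃ z ∈ p ⁻¹' (V x), C = connectedComponentIn (p ⁻¹' (V x)) z}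
            sheet := fun x l => l.1
            sheet_open := ?_
            sheet_disjoint := ?_
            sheet_preimage := ?_
            sheet_homeo := ?_
            overlay := ?_ }, ?_, ?_⟩
  · -- sheet_open
    intro x l
    obtain ⟨m, hm⟩ := key x _ (hVC₀ x) l.1 l.2
    simp only [hm]
    exact (C₀.sheet_open _ m).inter ((hV2 x).preimage hcont)
  · -- sheet_disjoint
    intro x l l' hne
    rw [Set.disjoint_left]
    intro z hz hz'
    apply hne
    obtain ⟨C, w, hw, rfl⟩ := l
    obtain ⟨C', w', hw', rfl⟩ := l'
    have e1 : connectedComponentIn (p ⁻¹' (V x)) w = connectedComponentIn (p ⁻¹' (V x)) z :=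
      connectedComponentIn_eq hz
    have e2 : connectedComponentIn (p ⁻¹' (V x)) w' = connectedComponentIn (p ⁻¹' (V x)) z :=
      connectedComponentIn_eq hz'
    exact Subtype.ext (e1.trans e2.symm)
  · -- sheet_preimage
    intro x
    apply subset_antisymm
    · intro z hz
      exact mem_iUnion.2 ⟨⟨connectedComponentIn (p ⁻¹' (V x)) z, z, hz, rfl⟩,
        mem_connectedComponentIn hz⟩
    · rintro z hz
      obtain ⟨_, ⟨l, rfl⟩, hl⟩ := hz
      obtain ⟨C, w, hw, rfl⟩ := l
      exact connectedComponentIn_subset _ _ hl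
  · -- sheet_homeo
    intro x l
    obtain ⟨C, hC⟩ := l
    obtain ⟨m, hm⟩ := key x _ (hVC₀ x) C hC
    show ∃ e : C ≃ₜ (V x), ∀ z : C, (e z : X) = p z
    subst hm
    exact C₀.slice_homeo hcont _ m (hV2 x) (hVC₀ x)
  · -- overlay
    intro x y l μ ν h1 h2
    obtain ⟨z, hzl, hzμ⟩ := h1
    obtain ⟨w, hwl, hwν⟩ := h2
    have hlsub : l.1 ⊆ p ⁻¹' (V x) := by
      obtain ⟨u, hu, hC⟩ := l.2
      rw [hC]; exact connectedComponentIn_subset _ _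
    have hμsub : μ.1 ⊆ p ⁻¹' (V y) := by
      obtain ⟨u, hu, hC⟩ := μ.2
      rw [hC]; exact connectedComponentIn_subset _ _
    have hVy : V y ⊆ C₀.base (idx x).1 :=
      hoverlap x y ⟨p z, hlsub hzl, hμsub hzμ⟩
    obtain ⟨L, hL⟩ := key x _ (hVC₀ x) l.1 l.2
    obtain ⟨M, hM⟩ := key y _ hVy μ.1 μ.2
    obtain ⟨N, hN⟩ := key y _ hVy ν.1 ν.2
    have hzL : z ∈ C₀.sheet (idx x).1 L := by
      have h : z ∈ (l.1 : Set E) := hzl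
      rw [hL] at h; exact h.1
    have hzM : z ∈ C₀.sheet (idx x).1 M := by
      have h : z ∈ (μ.1 : Set E) := hzμ
      rw [hM] at h; exact h.1
    have hwL : w ∈ C₀.sheet (idx x).1 L := by
      have h : w ∈ (l.1 : Set E) := hwl
      rw [hL] at h; exact h.1
    have hwN : w ∈ C₀.sheet (idx x).1 N := by
      have h : w ∈ (ν.1 : Set E) := hwν
      rw [hN] at h; exact h.1
    have hLM : L = M := by
      by_contra hne
      exact Set.disjoint_left.mp (C₀.sheet_disjoint _ L M hne) hzL hzM
    have hLN : L = N := by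
      by_contra hne
      exact Set.disjoint_left.mp (C₀.sheet_disjoint _ L N hne) hwL hwN
    apply Subtype.ext
    rw [hM, hN, ← hLM, ← hLN]
  · -- refines D
    intro x l
    obtain ⟨m, hm⟩ := ref D x _ (hVD x) l.1 l.2
    exact ⟨(idx x).2.1, m, hm⟩
  · -- refines D'
    intro x l
    obtain ⟨m, hm⟩ := ref D' x _ (hVD' x) l.1 l.2
    exact ⟨(idx x).2.2, m, hm⟩

/-- Over a compact, locally connected metric space, every covering map admits an
overlay structure, and any two overlay structures on it are equivalent. -/
theorem overlayStructure_exists_unique_of_locallyConnected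
    {E X : Type} [TopologicalSpace E] [MetricSpace X] [CompactSpace X]
    [LocallyConnectedSpace X]
    (p : E → X) (hcont : Continuous p) (hsurj : Function.Surjective p)
    (hcov : Nonempty (CoverData p)) :
    Nonempty (OverlayStructure p) ∧
      ∀ O O' : OverlayStructure p, O.Equiv O' := by
  obtain ⟨C₀⟩ := hcov
  constructor
  · obtain ⟨O, -, -⟩ := overlay_main hcont C₀ C₀ C₀
    exact ⟨O⟩
  · intro O O'
    obtain ⟨O'', h1, h2⟩ := overlay_main hcont O.toCoverData O.toCoverData O'.toCoverData
    exact ⟨O'', h1, h2⟩
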